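/- For every k ∈ ℤ² \ {0}, the sum over pairs of nonzero m, n ∈ ℤ² with m + n = k of |m·n|/(|m|² |n|²) diverges to infinity. -/

import Mathlib

open scoped ENNReal

/-- Euclidean norm of a lattice point in `ℤ²`. -/
noncomputable def latNorm (m : ℤ × ℤ) : ℝ :=
  Real.sqrt ((m.1 : ℝ)^2 + (m.2 : ℝ)^2)

/-- Inner product of two lattice points in `ℤ²`, as a real number. -/
def latDot (m n : ℤ × ℤ) : ℝ := (m.1 : ℝ) * n.1 + (m.2 : ℝ) * n.2

lemma latNorm_sq (m : ℤ × ℤ) : latNorm m ^ 2 = (m.1 : ℝ)^2 + (m.2 : ℝ)^2 := by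
  rw [latNorm, Real.sq_sqrt (by positivity)]

lemma key_ineq (k1 k2 x y : ℝ) (hx : 0 < x)
    (h4 : 4*(k1^2+k2^2) ≤ x^2+y^2) (hn : (k1-x)^2+(k2-y)^2 ≠ 0) :
    1/(8*(x^2+y^2)) ≤ |x*(k1-x)+y*(k2-y)| / ((x^2+y^2)*((k1-x)^2+(k2-y)^2)) := by
  have hQm : 0 < x^2+y^2 := by positivity
  have hQn : 0 < (k1-x)^2+(k2-y)^2 := lt_of_le_of_ne (by positivity) (Ne.symm hn)
  have hs2 : (x*k1+y*k2)^2 ≤ (x^2+y^2)*(k1^2+k2^2) := by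
    nlinarith [sq_nonneg (x*k2 - y*k1)]
  have hs1 : x*k1+y*k2 ≤ (x^2+y^2)/2 := by
    nlinarith [sq_nonneg ((x*k1+y*k2) - (x^2+y^2)/2), sq_nonneg ((x*k1+y*k2) + (x^2+y^2)/2)]
  have hnum : (x^2+y^2)/2 ≤ |x*(k1-x)+y*(k2-y)| := by
    have he : x*(k1-x)+y*(k2-y) = (x*k1+y*k2) - (x^2+y^2) := by ring
    rw [he, abs_sub_comm, abs_of_nonneg (by linarith)]
    linarith
  have hQn3 : (k1-x)^2+(k2-y)^2 ≤ 3*(x^2+y^2) := by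
    nlinarith [sq_nonneg (k1+x), sq_nonneg (k2+y)]
  rw [div_le_div_iff₀ (by positivity) (by positivity)]
  nlinarith [mul_le_mul_of_nonneg_right hnum (mul_nonneg hQm.le hQn.le),
    mul_le_mul_of_nonneg_left hQn3 (abs_nonneg (x*(k1-x)+y*(k2-y))),
    abs_nonneg (x*(k1-x)+y*(k2-y)), mul_le_mul_of_nonneg_left hQn3 hQm.le]

set_option maxHeartbeats 2000000 in
theorem nonlinearity_not_absolutely_convergent (k : ℤ × ℤ) (hk : k ≠ 0) :
    (∑' p : {p : (ℤ × ℤ) × (ℤ × ℤ) // p.1 ≠ 0 ∧ p.2 ≠ 0 ∧ p.1 + p.2 = k},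
      ENNReal.ofReal (|latDot p.1.1 p.1.2| / (latNorm p.1.1 ^ 2 * latNorm p.1.2 ^ 2)))
      = ∞ := by
  obtain ⟨L, hLdef⟩ : ∃ L : ℕ, L = 2 * (k.1.natAbs + k.2.natAbs) + 1 := ⟨_, rfl⟩
  have hL1 : 1 ≤ L := by omega
  have hLk1 : (k.1 : ℤ) < (L : ℤ) := by
    have h1 : k.1 ≤ (k.1.natAbs : ℤ) := Int.le_natAbs
    omega
  set m : ℕ × ℕ → ℤ × ℤ := fun p => (((L : ℤ) + p.1 + p.2), (p.2 : ℤ)) with hmdef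
  have hmne : ∀ p : ℕ × ℕ, m p ≠ 0 := by
    intro p h
    have h1 : (m p).1 = 0 := by rw [h]; rfl
    simp only [hmdef] at h1
    omega
  have hnne : ∀ p : ℕ × ℕ, k - m p ≠ 0 := by
    intro p h
    have h1 : (k - m p).1 = 0 := by rw [h]; rfl
    simp only [Prod.fst_sub, hmdef] at h1
    omega
  set ι : ℕ × ℕ → {p : (ℤ × ℤ) × (ℤ × ℤ) // p.1 ≠ 0 ∧ p.2 ≠ 0 ∧ p.1 + p.2 = k} :=
    fun p => ⟨(m p, k - m p), hmne p, hnne p, by ring⟩ with hιdef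
  have hinj : Function.Injective ι := by
    intro p q h
    simp only [hιdef, Subtype.mk.injEq, Prod.mk.injEq, hmdef] at h
    obtain ⟨⟨h1, h2⟩, -⟩ := h
    have e2 : p.2 = q.2 := by exact_mod_cast h2
    have e1 : p.1 = q.1 := by omega
    exact Prod.ext e1 e2
  set f : {p : (ℤ × ℤ) × (ℤ × ℤ) // p.1 ≠ 0 ∧ p.2 ≠ 0 ∧ p.1 + p.2 = k} → ℝ≥0∞ :=
    fun p => ENNReal.ofReal (|latDot p.1.1 p.1.2| / (latNorm p.1.1 ^ 2 * latNorm p.1.2 ^ 2))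
    with hfdef
  have step1 : ∑' p : ℕ × ℕ, f (ι p) ≤ ∑' p, f p :=
    ENNReal.tsum_comp_le_tsum_of_injective hinj f
  -- pointwise lower bound
  have step2 : ∀ p : ℕ × ℕ,
      ENNReal.ofReal (1/(16*((L:ℝ)+p.1+p.2)^2)) ≤ f (ι p) := by
    intro p
    apply ENNReal.ofReal_le_ofReal
    show 1/(16*((L:ℝ)+p.1+p.2)^2)
        ≤ |latDot (m p) (k - m p)| / (latNorm (m p) ^ 2 * latNorm (k - m p) ^ 2)
    have hLpos : (1:ℝ) ≤ (L:ℝ) := by exact_mod_cast hL1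
    have hp1 : (0:ℝ) ≤ (p.1 : ℝ) := Nat.cast_nonneg _
    have hp2 : (0:ℝ) ≤ (p.2 : ℝ) := Nat.cast_nonneg _
    have hx1 : (1:ℝ) ≤ (L:ℝ)+p.1+p.2 := by linarith
    -- cast facts
    have hmx : ((m p).1 : ℝ) = (L:ℝ)+p.1+p.2 := by
      simp only [hmdef]; push_cast; ring
    have hmy : ((m p).2 : ℝ) = (p.2 : ℝ) := by simp only [hmdef]; push_cast; ring
    have hnx : ((k - m p).1 : ℝ) = (k.1:ℝ) - ((L:ℝ)+p.1+p.2) := by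
      rw [Prod.fst_sub, Int.cast_sub, hmx]
    have hny : ((k - m p).2 : ℝ) = (k.2:ℝ) - (p.2:ℝ) := by
      rw [Prod.snd_sub, Int.cast_sub, hmy]
    -- size conditions
    have hLreal : 4*((k.1:ℝ)^2 + (k.2:ℝ)^2) ≤ (L:ℝ)^2 := by
      have hu : ((k.1.natAbs : ℝ)) = |(k.1:ℝ)| := by rw [Nat.cast_natAbs]; push_cast; ring
      have hv : ((k.2.natAbs : ℝ)) = |(k.2:ℝ)| := by rw [Nat.cast_natAbs]; push_cast; ring
      have hLr : (L:ℝ) = 2*(|(k.1:ℝ)| + |(k.2:ℝ)|) + 1 := by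
        rw [hLdef]; push_cast [hu, hv]; ring
      nlinarith [sq_abs (k.1:ℝ), sq_abs (k.2:ℝ), abs_nonneg (k.1:ℝ), abs_nonneg (k.2:ℝ)]
    have h4 : 4*((k.1:ℝ)^2+(k.2:ℝ)^2) ≤ ((L:ℝ)+p.1+p.2)^2+((p.2:ℝ))^2 := by
      nlinarith [sq_nonneg ((p.2:ℝ))]
    have hnne' : ((k.1:ℝ)-((L:ℝ)+p.1+p.2))^2+((k.2:ℝ)-(p.2:ℝ))^2 ≠ 0 := by
      have hlt : (k.1:ℝ) < (L:ℝ)+p.1+p.2 := by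
        have : (k.1:ℝ) < (L:ℝ) := by exact_mod_cast hLk1
        linarith
      have h2 : 0 < ((k.1:ℝ)-((L:ℝ)+p.1+p.2))^2 := by
        have : (k.1:ℝ)-((L:ℝ)+p.1+p.2) ≠ 0 := by linarith
        positivity
      positivity
    have key := key_ineq (k.1:ℝ) (k.2:ℝ) ((L:ℝ)+p.1+p.2) (p.2:ℝ) (by linarith) h4 hnne'
    have hgoal : |latDot (m p) (k - m p)| / (latNorm (m p) ^ 2 * latNorm (k - m p) ^ 2)
        = |((L:ℝ)+p.1+p.2)*((k.1:ℝ)-((L:ℝ)+p.1+p.2))+((p.2:ℝ))*((k.2:ℝ)-(p.2:ℝ))|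
          / ((((L:ℝ)+p.1+p.2)^2+((p.2:ℝ))^2)
             *(((k.1:ℝ)-((L:ℝ)+p.1+p.2))^2+((k.2:ℝ)-(p.2:ℝ))^2)) := by
      rw [latNorm_sq, latNorm_sq]
      simp only [latDot]
      rw [hmx, hmy, hnx, hny]
    rw [hgoal]
    refine le_trans ?_ key
    have hxx : ((L:ℝ)+p.1+p.2)^2+((p.2:ℝ))^2 ≤ 2*((L:ℝ)+p.1+p.2)^2 := by nlinarith
    have h8 : (0:ℝ) < 8*(((L:ℝ)+p.1+p.2)^2+((p.2:ℝ))^2) := by positivity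
    have h16 : (0:ℝ) < 16*((L:ℝ)+p.1+p.2)^2 := by positivity
    rw [div_le_div_iff₀ h16 h8]
    linarith [hxx]
  have hinner : ∀ i : ℕ, ENNReal.ofReal (1/(64*((L:ℝ)+i)))
      ≤ ∑' j : ℕ, ENNReal.ofReal (1/(16*((L:ℝ)+i+j)^2)) := by
    intro i
    have hN1 : (1:ℝ) ≤ (L:ℝ)+i := by
      have h1 : (1:ℝ) ≤ (L:ℝ) := by exact_mod_cast hL1
      have h2 : (0:ℝ) ≤ (i:ℝ) := Nat.cast_nonneg _
      linarith
    have hbound : ∀ j ∈ Finset.range (L+i),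
        ENNReal.ofReal (1/(64*((L:ℝ)+i)^2)) ≤ ENNReal.ofReal (1/(16*((L:ℝ)+i+j)^2)) := by
      intro j hj
      apply ENNReal.ofReal_le_ofReal
      have hj' : (j:ℝ) ≤ (L:ℝ)+i := by
        have h1 := (Finset.mem_range.1 hj).le
        have h2 : (j:ℝ) ≤ ((L+i : ℕ):ℝ) := by exact_mod_cast h1
        push_cast at h2; linarith
      have hjpos : (0:ℝ) ≤ (j:ℝ) := Nat.cast_nonneg _
      have hup : (L:ℝ)+i+j ≤ 2*((L:ℝ)+i) := by linarith
      have hlo : (1:ℝ) ≤ (L:ℝ)+i+j := by linarith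
      have hpos : (0:ℝ) < 16*((L:ℝ)+i+j)^2 := by positivity
      have hpos2 : (0:ℝ) < 64*((L:ℝ)+i)^2 := by positivity
      rw [div_le_div_iff₀ hpos2 hpos]
      nlinarith
    have hcard := Finset.card_nsmul_le_sum (Finset.range (L+i)) _ _ hbound
    rw [Finset.card_range] at hcard
    have hts := le_trans hcard (ENNReal.sum_le_tsum
      (f := fun j : ℕ => ENNReal.ofReal (1/(16*((L:ℝ)+i+j)^2))) (Finset.range (L+i)))
    refine le_trans (le_of_eq ?_) hts
    rw [nsmul_eq_mul, ← ENNReal.ofReal_natCast, ← ENNReal.ofReal_mul (by positivity)]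
    congr 1
    have hne : ((L:ℝ)+i) ≠ 0 := by linarith
    push_cast
    field_simp
  have houter : ∑' i : ℕ, ENNReal.ofReal (1/(64*((L:ℝ)+i))) = ∞ := by
    by_contra h
    have hsum := ENNReal.summable_toReal h
    have hsum2 : Summable (fun i : ℕ => 1/(64*((L:ℝ)+i))) := by
      refine hsum.congr fun i => ?_
      exact ENNReal.toReal_ofReal (by positivity)
    have h64 : Summable (fun i : ℕ => ((L:ℝ)+i)⁻¹) := by
      have hmul := hsum2.mul_left 64
      refine hmul.congr fun i => ?_
      have hne : ((L:ℝ)+i) ≠ 0 := by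
        have h1 : (1:ℝ) ≤ (L:ℝ) := by exact_mod_cast hL1
        have h2 : (0:ℝ) ≤ (i:ℝ) := Nat.cast_nonneg _
        linarith
      field_simp
    have hS : Summable (fun n : ℕ => ((n + L : ℕ) : ℝ)⁻¹) := by
      refine h64.congr fun i => ?_
      push_cast
      ring_nf
    exact Real.not_summable_natCast_inv ((summable_nat_add_iff L).1 hS)
  have step3 : ∑' p : ℕ × ℕ, ENNReal.ofReal (1/(16*((L:ℝ)+p.1+p.2)^2)) = ∞ := by
    refine top_unique ?_
    rw [ENNReal.tsum_prod (f := fun i j : ℕ => ENNReal.ofReal (1/(16*((L:ℝ)+i+j)^2)))]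
    calc (⊤:ℝ≥0∞) = ∑' i : ℕ, ENNReal.ofReal (1/(64*((L:ℝ)+i))) := houter.symm
      _ ≤ ∑' (i : ℕ) (j : ℕ), ENNReal.ofReal (1/(16*((L:ℝ)+i+j)^2)) :=
        ENNReal.tsum_le_tsum hinner
  have final := le_trans (ENNReal.tsum_le_tsum step2) step1
  rw [step3] at final
  exact top_le_iff.mp final
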